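/- arXiv:2404.17805 — 2 statements merged into one kernel-verified Lean document; each statement's English description precedes it below -/
import Mathlib

section
/- Let K, A be positive integers, a : Fin K → Fin A surjective, Θ a nonempty type, and F : Θ → Fin A → ℝ a parameterized per-attribute expected loss. Then the infimum over θ ∈ Θ of the supremum over λ in the standard simplex of ℝ^K of ∑_{k} λ_k · F(θ, a(k)) equals the infimum over θ ∈ Θ of the supremum over μ in the standard simplex of ℝ^A of ∑_{u} μ_u · F(θ, u). (Minimax equivalence of client-level fairness and group-level fairness, Theorem 1.) -/
lemma simplex_sup {ι : Type*} [Fintype ι] [DecidableEq ι] [Nonempty ι] (g : ι → ℝ) :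
    (⨆ lam : stdSimplex ℝ ι, ∑ i, (lam : ι → ℝ) i * g i) = ⨆ i, g i := by
  have hmem : ∀ i : ι, (fun j => if j = i then (1:ℝ) else 0) ∈ stdSimplex ℝ ι := by
    intro i
    constructor
    · intro j; dsimp; split <;> norm_num
    · simp
  have : Nonempty (stdSimplex ℝ ι) := ⟨⟨_, hmem (Classical.arbitrary ι)⟩⟩
  have hbd : ∀ lam : stdSimplex ℝ ι, ∑ i, (lam : ι → ℝ) i * g i ≤ ⨆ i, g i := by
    intro lam
    obtain ⟨hpos, hsum⟩ := lam.2
    calc ∑ i, (lam : ι → ℝ) i * g i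
        ≤ ∑ i, (lam : ι → ℝ) i * (⨆ j, g j) := by
          refine Finset.sum_le_sum fun i _ => ?_
          exact mul_le_mul_of_nonneg_left (le_ciSup (Set.finite_range g).bddAbove i)
            (hpos i)
      _ = ⨆ j, g j := by rw [← Finset.sum_mul, show (∑ i, (lam : ι → ℝ) i) = 1 from hsum, one_mul]
  refine le_antisymm (ciSup_le hbd) (ciSup_le fun i => ?_)
  refine le_ciSup_of_le ⟨⨆ j, g j, Set.forall_mem_range.2 hbd⟩ ⟨_, hmem i⟩ ?_
  show g i ≤ ∑ j, (fun j => if j = i then (1:ℝ) else 0) j * g j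
  simp [ite_mul]

/-- Theorem 1, minimax equivalence: the infimum over θ of the supremum
over the client simplex of `∑ k, λ k * F θ (a k)` equals the infimum over θ of the
supremum over the attribute simplex of `∑ u, μ u * F θ u`. -/
theorem stmt2 (K A : ℕ) (hK : 0 < K) (hA : 0 < A)
    (a : Fin K → Fin A) (ha : Function.Surjective a)
    (Θ : Type*) [Nonempty Θ] (F : Θ → Fin A → ℝ) :
    (⨅ θ : Θ, ⨆ lam : stdSimplex ℝ (Fin K), ∑ k, (lam : Fin K → ℝ) k * F θ (a k)) =
      ⨅ θ : Θ, ⨆ mu : stdSimplex ℝ (Fin A), ∑ u, (mu : Fin A → ℝ) u * F θ u := by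
  have hK' : Nonempty (Fin K) := ⟨⟨0, hK⟩⟩
  have hA' : Nonempty (Fin A) := ⟨⟨0, hA⟩⟩
  refine iInf_congr fun θ => ?_
  rw [simplex_sup (fun k => F θ (a k)), simplex_sup (F θ)]
  exact congrArg sSup (ha.range_comp (F θ))
end

section
/- Let K, A be positive integers, a : Fin K → Fin A surjective, Θ a type, F : Θ → Fin A → ℝ, and T(λ)(u) = ∑_{k : a(k) = u} λ_k. Suppose θ* ∈ Θ and λ* in the standard simplex of ℝ^K form a solution of the client-level minimax problem, i.e., λ* maximizes λ ↦ ∑_k λ_k · F(θ*, a(k)) over the standard simplex of ℝ^K, and θ* minimizes θ ↦ sup_{λ ∈ simplex} ∑_k λ_k · F(θ, a(k)) over Θ. Then θ* and μ* = T(λ*) form a solution of the group-level minimax problem: μ* maximizes μ ↦ ∑_u μ_u · F(θ*, u) over the standard simplex of ℝ^A, and θ* minimizes θ ↦ sup_{μ ∈ simplex} ∑_u μ_u · F(θ, u) over Θ. -/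
open Finset

private lemma push_mem {K A : ℕ} (a : Fin K → Fin A) {lam : Fin K → ℝ}
    (h : lam ∈ stdSimplex ℝ (Fin K)) :
    (fun u : Fin A => ∑ k ∈ Finset.univ.filter (fun k => a k = u), lam k)
      ∈ stdSimplex ℝ (Fin A) := by
  constructor
  · intro u
    exact Finset.sum_nonneg fun k _ => h.1 k
  · rw [← h.2]
    exact Finset.sum_fiberwise _ _ _

private lemma push_val {K A : ℕ} (a : Fin K → Fin A) (lam : Fin K → ℝ) (g : Fin A → ℝ) :
    ∑ u, (∑ k ∈ Finset.univ.filter (fun k => a k = u), lam k) * g u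
      = ∑ k, lam k * g (a k) := by
  calc ∑ u, (∑ k ∈ Finset.univ.filter (fun k => a k = u), lam k) * g u
      = ∑ u, ∑ k ∈ Finset.univ.filter (fun k => a k = u), lam k * g (a k) := by
        refine Finset.sum_congr rfl fun u _ => ?_
        rw [Finset.sum_mul]
        refine Finset.sum_congr rfl fun k hk => ?_
        rw [(Finset.mem_filter.mp hk).2]
    _ = ∑ k, lam k * g (a k) := Finset.sum_fiberwise _ _ _

private lemma simplex_nonempty {K : ℕ} (hK : 0 < K) :
    Nonempty (stdSimplex ℝ (Fin K)) := by
  refine ⟨⟨fun _ => 1 / K, fun _ => by positivity, ?_⟩⟩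
  rw [Finset.sum_const, Finset.card_univ, Fintype.card_fin, nsmul_eq_mul]
  field_simp

private lemma bdd {K : ℕ} (h : Fin K → ℝ) :
    BddAbove (Set.range fun lam : stdSimplex ℝ (Fin K) =>
      ∑ k, (lam : Fin K → ℝ) k * h k) := by
  refine ⟨∑ k, |h k|, ?_⟩
  rintro x ⟨lam, rfl⟩
  refine Finset.sum_le_sum fun k _ => ?_
  calc (lam : Fin K → ℝ) k * h k ≤ |(lam : Fin K → ℝ) k * h k| := le_abs_self _
    _ = (lam : Fin K → ℝ) k * |h k| := by
        rw [abs_mul]; congr 1; exact abs_of_nonneg (lam.2.1 k)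
    _ ≤ 1 * |h k| := by
        refine mul_le_mul_of_nonneg_right ?_ (abs_nonneg _)
        rw [← lam.2.2]
        exact Finset.single_le_sum (fun i _ => lam.2.1 i) (Finset.mem_univ k)
    _ = |h k| := one_mul _

private lemma sup_eq {K A : ℕ} (hK : 0 < K) (hA : 0 < A) (a : Fin K → Fin A)
    (ha : Function.Surjective a) (g : Fin A → ℝ) :
    (⨆ lam : stdSimplex ℝ (Fin K), ∑ k, (lam : Fin K → ℝ) k * g (a k))
      = ⨆ mu : stdSimplex ℝ (Fin A), ∑ u, (mu : Fin A → ℝ) u * g u := by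
  haveI := simplex_nonempty hK
  haveI := simplex_nonempty hA
  apply le_antisymm
  · refine ciSup_le fun lam => ?_
    have := push_val a (lam : Fin K → ℝ) g
    calc ∑ k, (lam : Fin K → ℝ) k * g (a k)
        = ∑ u, (∑ k ∈ Finset.univ.filter (fun k => a k = u), (lam : Fin K → ℝ) k) * g u :=
          this.symm
      _ ≤ _ := le_ciSup (bdd g) ⟨_, push_mem a lam.2⟩
  · refine ciSup_le fun mu => ?_
    set s : Fin A → Fin K := fun u => (ha u).choose with hs
    have hsa : ∀ u, a (s u) = u := fun u => (ha u).choose_spec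
    have hval := push_val s (mu : Fin A → ℝ) (fun k => g (a k))
    have hmem := push_mem s mu.2
    calc ∑ u, (mu : Fin A → ℝ) u * g u
        = ∑ u, (mu : Fin A → ℝ) u * g (a (s u)) := by
          refine Finset.sum_congr rfl fun u _ => ?_
          rw [hsa u]
      _ = ∑ k, (∑ u ∈ Finset.univ.filter (fun u => s u = k), (mu : Fin A → ℝ) u) * g (a k) :=
          hval.symm
      _ ≤ _ := le_ciSup (bdd fun k => g (a k)) ⟨_, hmem⟩

/-- A solution `(θ*, λ*)` of the client-level minimax problem yields,
via the pushforward `μ* = T(λ*)`, a solution `(θ*, μ*)` of the group-level minimax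
problem. -/
theorem stmt6 (K A : ℕ) (hK : 0 < K) (hA : 0 < A)
    (a : Fin K → Fin A) (ha : Function.Surjective a)
    (Θ : Type*) (F : Θ → Fin A → ℝ) (θStar : Θ)
    (lamStar : Fin K → ℝ) (hmem : lamStar ∈ stdSimplex ℝ (Fin K))
    (hlamMax : ∀ lam ∈ stdSimplex ℝ (Fin K),
      ∑ k, lam k * F θStar (a k) ≤ ∑ k, lamStar k * F θStar (a k))
    (hθMin : ∀ θ : Θ,
      (⨆ lam : stdSimplex ℝ (Fin K), ∑ k, (lam : Fin K → ℝ) k * F θStar (a k)) ≤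
        ⨆ lam : stdSimplex ℝ (Fin K), ∑ k, (lam : Fin K → ℝ) k * F θ (a k)) :
    (fun u : Fin A => ∑ k ∈ Finset.univ.filter (fun k => a k = u), lamStar k)
        ∈ stdSimplex ℝ (Fin A) ∧
    (∀ mu ∈ stdSimplex ℝ (Fin A),
      ∑ u, mu u * F θStar u ≤
        ∑ u, (∑ k ∈ Finset.univ.filter (fun k => a k = u), lamStar k) * F θStar u) ∧
    (∀ θ : Θ,
      (⨆ mu : stdSimplex ℝ (Fin A), ∑ u, (mu : Fin A → ℝ) u * F θStar u) ≤
        ⨆ mu : stdSimplex ℝ (Fin A), ∑ u, (mu : Fin A → ℝ) u * F θ u) := by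
  refine ⟨push_mem a hmem, ?_, ?_⟩
  · intro mu hmu
    set s : Fin A → Fin K := fun u => (ha u).choose with hs
    have hsa : ∀ u, a (s u) = u := fun u => (ha u).choose_spec
    have hval := push_val s mu (fun k => F θStar (a k))
    calc ∑ u, mu u * F θStar u
        = ∑ u, mu u * F θStar (a (s u)) := by
          refine Finset.sum_congr rfl fun u _ => ?_
          rw [hsa u]
      _ = ∑ k, (∑ u ∈ Finset.univ.filter (fun u => s u = k), mu u) * F θStar (a k) :=
          hval.symm
      _ ≤ ∑ k, lamStar k * F θStar (a k) := hlamMax _ (push_mem s hmu)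
      _ = ∑ u, (∑ k ∈ Finset.univ.filter (fun k => a k = u), lamStar k) * F θStar u :=
          (push_val a lamStar (F θStar)).symm
  · intro θ
    rw [← sup_eq hK hA a ha (F θStar), ← sup_eq hK hA a ha (F θ)]
    exact hθMin θ
end
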